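/- Let c₀ > 0, p ≥ 2, 2γ > p, and suppose the functional J(w) = (1/p)‖w‖^p − (1/(2γ))Φ(w) satisfies: ⟨J'(w), w⟩ ≥ (1/4)‖w‖^p whenever ‖w‖ ≤ ρ, where ρ > 0. If {w_k} is a Palais–Smale sequence at level c with lim ‖w_k‖^p = 2γpc/(2γ−p) and c < (2γ−p)ρ^p/(2γp), then ‖w_k‖ → 0 and c = 0. -/
import Mathlib


open Filter

/-- Dichotomy for Palais–Smale levels: if `⟨J'(w),w⟩ ≥ (1/4)‖w‖^p` whenever `‖w‖ ≤ ρ`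
and `{w_k}` is a Palais–Smale sequence at level `c < (2γ−p)ρ^p/(2γp)` with
`lim ‖w_k‖^p = 2γpc/(2γ−p)`, then `‖w_k‖ → 0` and `c = 0`. -/
theorem stmt_16 {W : Type*} [NormedAddCommGroup W] (p γ c ρ : ℝ)
    (hp : 2 ≤ p) (hγ : p < 2 * γ) (hρ : 0 < ρ)
    (Φ : W → ℝ) (w : ℕ → W) (ε : ℕ → ℝ)
    (hcoerc : ∀ z : W, ‖z‖ ≤ ρ → (1 / 4) * ‖z‖ ^ p ≤ ‖z‖ ^ p - Φ z)
    (hε : Tendsto ε atTop (nhds 0))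
    (hps : ∀ k, |‖w k‖ ^ p - Φ (w k)| ≤ ε k * ‖w k‖)
    (hlim : Tendsto (fun k => ‖w k‖ ^ p) atTop (nhds (2 * γ * p * c / (2 * γ - p))))
    (hc : c < (2 * γ - p) * ρ ^ p / (2 * γ * p)) :
    Tendsto (fun k => ‖w k‖) atTop (nhds 0) ∧ c = 0 := by
  have hp0 : (0:ℝ) < p := by linarith
  have hd : (0:ℝ) < 2 * γ - p := by linarith
  have hγ0 : (0:ℝ) < γ := by linarith
  set L : ℝ := 2 * γ * p * c / (2 * γ - p) with hL
  have hLρ : L < ρ ^ p := by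
    rw [hL, div_lt_iff₀ hd]
    rw [lt_div_iff₀ (by positivity)] at hc
    nlinarith
  -- eventually ‖w k‖ ≤ ρ
  have hev : ∀ᶠ k in atTop, ‖w k‖ ≤ ρ := by
    filter_upwards [hlim.eventually_lt_const hLρ] with k hk
    by_contra h
    push_neg at h
    exact absurd (Real.rpow_le_rpow hρ.le h.le hp0.le) (not_le.mpr hk)
  -- squeeze ‖w k‖^p → 0
  have hbound : ∀ᶠ k in atTop, ‖w k‖ ^ p ≤ 4 * (|ε k| * ρ) := by
    filter_upwards [hev] with k hk
    have h1 := hcoerc (w k) hk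
    have h2 := hps k
    have h3 : ε k * ‖w k‖ ≤ |ε k| * ρ :=
      mul_le_mul (le_abs_self _) hk (norm_nonneg _) (abs_nonneg _)
    have h4 : ‖w k‖ ^ p - Φ (w k) ≤ |ε k| * ρ :=
      le_trans (le_trans (le_abs_self _) h2) h3
    linarith
  have hlow : ∀ᶠ k in atTop, (0:ℝ) ≤ ‖w k‖ ^ p :=
    Eventually.of_forall fun k => Real.rpow_nonneg (norm_nonneg _) p
  have htop : Tendsto (fun k => 4 * (|ε k| * ρ)) atTop (nhds 0) := by
    have := (hε.abs.mul_const ρ).const_mul 4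
    simpa using this
  have hnorm_pow : Tendsto (fun k => ‖w k‖ ^ p) atTop (nhds 0) :=
    tendsto_of_tendsto_of_tendsto_of_le_of_le' tendsto_const_nhds htop hlow hbound
  have hL0 : L = 0 := tendsto_nhds_unique hlim hnorm_pow
  have hc0 : c = 0 := by
    rw [hL, div_eq_zero_iff] at hL0
    rcases hL0 with h | h
    · have : 2 * γ * p ≠ 0 := by positivity
      exact (mul_eq_zero.mp h).resolve_left this
    · linarith
  refine ⟨?_, hc0⟩
  have hcont : Tendsto (fun y : ℝ => y ^ (1/p)) (nhds 0) (nhds 0) := by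
    have := (Real.continuousAt_rpow_const 0 (1/p) (Or.inr (by positivity))).tendsto
    simpa [one_div, Real.zero_rpow (by positivity : p⁻¹ ≠ 0)] using this
  have heq : ∀ k, (‖w k‖ ^ p) ^ (1/p) = ‖w k‖ := fun k => by
    rw [one_div, Real.rpow_rpow_inv (norm_nonneg _) hp0.ne']
  exact Tendsto.congr heq (hcont.comp hnorm_pow)
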